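/- arXiv:1902.08064 — 2 statements merged into one kernel-verified Lean document; each statement's English description precedes it below -/
import Mathlib

section
/- Suppose λ, ν ∈ ℂ with Re λ > −1/2 and Re ν > 0. Then ∫_{−1}^1 ∫_{−1}^1 (1 − s²)^{λ−1/2} (t − s)_+^{2ν} ds dt = 2^{2λ+2ν+1} Γ(λ + 1/2) Γ(3/2 + λ + 2ν) / ((1 + 2ν) Γ(2 + 2λ + 2ν)). -/
open MeasureTheory intervalIntegral

/-- `y_+^α := y^α` for `y > 0`, `0` otherwise. -/
noncomputable def posPow (y : ℝ) (α : ℂ) : ℂ := if 0 < y then (y : ℂ) ^ α else 0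

lemma inner_eval (ν : ℂ) (hν : 0 < ν.re) {s : ℝ} (hs1 : -1 ≤ s) (hs2 : s ≤ 1) :
    (∫ t in (-1:ℝ)..1, posPow (t - s) (2 * ν)) =
      ((1 - s : ℝ) : ℂ) ^ (2 * ν + 1) / (2 * ν + 1) := by
  have h2ν : (2 * ν) ≠ 0 := by
    intro h; apply absurd hν; simp [show ν = 0 by simpa using h]
  have hre : (-1 : ℝ) < (2 * ν).re := by
    simp only [Complex.mul_re]; norm_num; nlinarith
  have hre0 : (0 : ℝ) ≤ (2 * ν).re := by
    simp only [Complex.mul_re]; norm_num; nlinarith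
  have h2ν1 : (2 * ν + 1) ≠ 0 := by
    intro h
    have : (2 * ν + 1).re = 0 := by rw [h]; simp
    simp only [Complex.add_re, Complex.mul_re, Complex.one_re] at this
    norm_num at this
    nlinarith [this]
  have h1 : IntervalIntegrable (fun t => posPow (t - s) (2 * ν)) volume (-1) s := by
    apply (intervalIntegrable_const (c := (0:ℂ))).congr
    intro t ht
    rw [Set.uIoc_of_le hs1] at ht
    simp only [posPow]
    rw [if_neg (by linarith [ht.2])]
  have h2 : IntervalIntegrable (fun t => posPow (t - s) (2 * ν)) volume s 1 := by
    have key := (intervalIntegrable_cpow (r := 2 * ν) (a := (0:ℝ)) (b := 1 - s)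
      (Or.inl hre0)).comp_sub_right s
    simp only [zero_add, sub_add_cancel] at key
    apply key.congr
    intro t ht
    rw [Set.uIoc_of_le hs2] at ht
    simp only [posPow]
    rw [if_pos (by linarith [ht.1])]
  rw [← intervalIntegral.integral_add_adjacent_intervals h1 h2]
  have e1 : (∫ t in (-1:ℝ)..s, posPow (t - s) (2 * ν)) = 0 := by
    rw [intervalIntegral.integral_congr (g := fun _ => (0:ℂ))]
    · simp
    · intro t ht
      rw [Set.uIcc_of_le hs1] at ht
      simp only [posPow]
      rw [if_neg (by linarith [ht.2])]
  have e2 : (∫ t in s..(1:ℝ), posPow (t - s) (2 * ν)) =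
      ∫ t in s..(1:ℝ), ((t - s : ℝ) : ℂ) ^ (2 * ν) := by
    apply intervalIntegral.integral_congr
    intro t ht
    rw [Set.uIcc_of_le hs2] at ht
    rcases lt_or_eq_of_le ht.1 with h | h
    · simp only [posPow]; rw [if_pos (by linarith)]
    · simp only [posPow]
      rw [if_neg (by simp [h]), ← h, sub_self, Complex.ofReal_zero,
        Complex.zero_cpow h2ν]
  rw [e1, e2, zero_add,
    intervalIntegral.integral_comp_sub_right (fun y => ((y : ℝ) : ℂ) ^ (2 * ν)) s,
    sub_self, integral_cpow (Or.inl hre)]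
  rw [Complex.ofReal_zero, Complex.zero_cpow h2ν1]
  push_cast
  ring

theorem stmt15 (lam ν : ℂ) (hlam : -(1 / 2 : ℝ) < lam.re) (hν : 0 < ν.re) :
    (∫ s in (-1 : ℝ)..1, ∫ t in (-1 : ℝ)..1,
        ((1 - s ^ 2 : ℝ) : ℂ) ^ (lam - 1 / 2 : ℂ) * posPow (t - s) (2 * ν)) =
      (2 : ℂ) ^ (2 * lam + 2 * ν + 1) * Complex.Gamma (lam + 1 / 2) *
          Complex.Gamma (3 / 2 + lam + 2 * ν) /
        ((1 + 2 * ν) * Complex.Gamma (2 + 2 * lam + 2 * ν)) := by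
  have hre2 : ((1:ℂ)/2).re = 1/2 := by norm_num [Complex.div_re]
  have hre32 : ((3:ℂ)/2).re = 3/2 := by norm_num [Complex.div_re]
  have hu : 0 < (lam + 1/2).re := by
    rw [Complex.add_re, hre2]; linarith
  have hv : 0 < (lam + 2*ν + 3/2).re := by
    rw [Complex.add_re, Complex.add_re, hre32, Complex.mul_re]
    norm_num; nlinarith
  have h2ν1 : (2 * ν + 1 : ℂ) ≠ 0 := by
    intro h
    have : (2 * ν + 1).re = 0 := by rw [h]; simp
    simp only [Complex.add_re, Complex.mul_re, Complex.one_re] at this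
    norm_num at this; nlinarith [this]
  have hGne : Complex.Gamma (2 + 2*lam + 2*ν) ≠ 0 := by
    apply Complex.Gamma_ne_zero_of_re_pos
    rw [show (2 + 2*lam + 2*ν : ℂ) = (lam + 1/2) + (lam + 2*ν + 3/2) by ring,
      Complex.add_re]
    linarith
  have h12ν : (1 + 2 * ν : ℂ) ≠ 0 := by rw [add_comm]; exact h2ν1
  set g : ℝ → ℂ := fun s =>
    ((1 + s : ℝ) : ℂ) ^ (lam - 1/2) * ((1 - s : ℝ) : ℂ) ^ (lam + 2*ν + 1/2) / (2*ν + 1) with hg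
  have hA : (∫ s in (-1 : ℝ)..1, ∫ t in (-1 : ℝ)..1,
        ((1 - s ^ 2 : ℝ) : ℂ) ^ (lam - 1 / 2 : ℂ) * posPow (t - s) (2 * ν)) =
      ∫ s in (-1:ℝ)..1, g s := by
    apply intervalIntegral.integral_congr
    intro s hs
    rw [Set.uIcc_of_le (by norm_num : (-1:ℝ) ≤ 1)] at hs
    show (∫ t in (-1:ℝ)..1, ((1 - s^2:ℝ):ℂ)^(lam - 1/2) * posPow (t - s) (2*ν)) = g s
    rw [intervalIntegral.integral_const_mul, inner_eval ν hν hs.1 hs.2, hg]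
    rcases eq_or_lt_of_le hs.2 with h1 | h1
    · have e0 : (1 - s : ℝ) = 0 := by rw [← h1]; ring
      have eexp : (lam + 2*ν + 1/2 : ℂ) ≠ 0 := by
        intro h
        have : (lam + 2*ν + 1/2).re = 0 := by rw [h]; simp
        rw [Complex.add_re, Complex.add_re, hre2, Complex.mul_re] at this
        norm_num at this; nlinarith [this]
      have eexp2 : (2*ν + 1 : ℂ) ≠ 0 := h2ν1
      simp only [e0, Complex.ofReal_zero, Complex.zero_cpow eexp,
        Complex.zero_cpow (by intro h; apply eexp2; linear_combination h : (2*ν+1:ℂ) ≠ 0)]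
      simp
    · have hne : ((1 - s : ℝ) : ℂ) ≠ 0 := by
        simp only [ne_eq, Complex.ofReal_eq_zero]; intro h; linarith [h]
      have hss : ((1 - s^2 : ℝ) : ℂ) = ((1-s:ℝ):ℂ) * ((1+s:ℝ):ℂ) := by
        push_cast; ring
      rw [hss, Complex.mul_cpow_ofReal_nonneg (by linarith [hs.2]) (by linarith [hs.1])]
      have hcomb : ((1-s:ℝ):ℂ)^(lam + 2*ν + 1/2) =
          ((1-s:ℝ):ℂ)^(lam - 1/2) * ((1-s:ℝ):ℂ)^(2*ν + 1) := by
        rw [← Complex.cpow_add _ _ hne]; ring_nf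
      show _ = ((1 + s : ℝ) : ℂ) ^ (lam - 1/2) * ((1 - s : ℝ) : ℂ) ^ (lam + 2*ν + 1/2) / (2*ν + 1)
      rw [hcomb]; ring
  rw [hA]
  have hB := intervalIntegral.smul_integral_comp_mul_add (a := (0:ℝ)) (b := 1) g 2 (-1)
  rw [show (2*(0:ℝ)+(-1)) = -1 by norm_num, show (2*(1:ℝ)+(-1)) = 1 by norm_num] at hB
  rw [← hB]
  have hC : (∫ x in (0:ℝ)..1, g (2*x + -1)) =
      (2:ℂ)^(lam - 1/2) * (2:ℂ)^(lam + 2*ν + 1/2) / (2*ν + 1) *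
        Complex.betaIntegral (lam + 1/2) (lam + 2*ν + 3/2) := by
    rw [Complex.betaIntegral, ← intervalIntegral.integral_const_mul]
    apply intervalIntegral.integral_congr
    intro x hx
    rw [Set.uIcc_of_le (by norm_num : (0:ℝ) ≤ 1)] at hx
    have e1 : (1 + (2*x + -1) : ℝ) = 2 * x := by ring
    have e2 : (1 - (2*x + -1) : ℝ) = 2 * (1 - x) := by ring
    rw [hg]
    simp only [e1, e2, Complex.ofReal_mul]
    rw [Complex.mul_cpow_ofReal_nonneg (by norm_num) hx.1,
        Complex.mul_cpow_ofReal_nonneg (by norm_num) (by linarith [hx.2])]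
    have : ((2:ℝ):ℂ) = (2:ℂ) := by norm_num
    rw [this]
    have c1 : (lam + 1/2 - 1 : ℂ) = lam - 1/2 := by ring
    have c2 : (lam + 2*ν + 3/2 - 1 : ℂ) = lam + 2*ν + 1/2 := by ring
    rw [c1, c2]
    have : ((1 - x : ℝ) : ℂ) = 1 - (x:ℂ) := by push_cast; ring
    rw [this]; ring
  rw [hC]
  have hβ : Complex.betaIntegral (lam + 1/2) (lam + 2*ν + 3/2) =
      Complex.Gamma (lam + 1/2) * Complex.Gamma (lam + 2*ν + 3/2) /
        Complex.Gamma (2 + 2*lam + 2*ν) := by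
    have hG := Complex.Gamma_mul_Gamma_eq_betaIntegral hu hv
    have hsum : (lam + 1/2) + (lam + 2*ν + 3/2) = 2 + 2*lam + 2*ν := by ring
    rw [hsum] at hG
    rw [eq_div_iff hGne]
    linear_combination -hG
  rw [hβ]
  rw [show (3/2 + lam + 2*ν : ℂ) = lam + 2*ν + 3/2 by ring]
  have hpow2 : (2:ℂ)^(lam - 1/2) * (2:ℂ)^(lam + 2*ν + 1/2) = (2:ℂ)^(2*lam + 2*ν) := by
    rw [← Complex.cpow_add _ _ two_ne_zero]; congr 1; ring
  have hpow1 : (2:ℂ)^(2*lam + 2*ν + 1) = (2:ℂ)^(2*lam + 2*ν) * 2 := by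
    rw [Complex.cpow_add _ _ two_ne_zero, Complex.cpow_one]
  rw [hpow2, hpow1, Complex.real_smul]
  push_cast
  field_simp
  ring
end

section
/- For ν ∈ ℂ with Re ν > 0, (1/(2π)) ∫_{−∞}^∞ ∫_{−∞}^∞ e^{−(s² + t²)/2} |s − t|^{2ν} ds dt = Γ(1 + 2ν)/Γ(1 + ν). (This is the n = 2 case of the Mehta integral.) -/
open MeasureTheory Real Set Complex

lemma aux_abs_rpow_int {b s : ℝ} (hb : 0 < b) (hs : 0 < s) :
    Integrable (fun x : ℝ => |x| ^ s * Real.exp (-b * x ^ 2)) := by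
  have k := integrable_rpow_mul_exp_neg_mul_sq hb (by linarith : (-1:ℝ) < s)
  have kneg : Integrable (fun x : ℝ => (-x) ^ s * Real.exp (-b * x ^ 2)) := by
    have := k.comp_neg
    simpa [Function.comp, neg_sq] using this
  have hmax : Integrable
      ((fun x : ℝ => x ^ s * Real.exp (-b * x ^ 2)) ⊔
        fun x : ℝ => (-x) ^ s * Real.exp (-b * x ^ 2)) := k.sup kneg
  refine hmax.congr (Filter.Eventually.of_forall fun x => ?_)
  have he : (0:ℝ) < Real.exp (-b * x ^ 2) := Real.exp_pos _
  rcases lt_trichotomy x 0 with hx | hx | hx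
  · have h1 : x ^ s = (-x) ^ s * Real.cos (s * π) := by
      rw [Real.rpow_def_of_neg hx, Real.rpow_def_of_pos (by linarith), ← Real.log_neg_eq_log]
    have h2 : (0:ℝ) ≤ (-x) ^ s := Real.rpow_nonneg (by linarith) _
    have h3 : x ^ s ≤ (-x) ^ s := by
      rw [h1]; nlinarith [Real.cos_le_one (s * π)]
    simp only [Pi.sup_apply, abs_of_neg hx]
    rw [max_def]
    split_ifs with h
    · rfl
    · exfalso; exact h (by nlinarith)
  · simp [hx, Real.zero_rpow hs.ne']
  · have h1 : (-x) ^ s = x ^ s * Real.cos (s * π) := by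
      rw [Real.rpow_def_of_neg (by linarith), Real.rpow_def_of_pos hx, Real.log_neg_eq_log]
    have h2 : (0:ℝ) ≤ x ^ s := Real.rpow_nonneg (by linarith) _
    have h3 : (-x) ^ s ≤ x ^ s := by
      rw [h1]; nlinarith [Real.cos_le_one (s * π)]
    simp only [Pi.sup_apply, abs_of_pos hx]
    rw [max_def]
    split_ifs with h
    · nlinarith
    · rfl

lemma integral_comp_abs_cx {f : ℝ → ℂ} (hf : Integrable (fun x : ℝ => f |x|)) :
    ∫ x : ℝ, f |x| = 2 * ∫ x in Ioi (0:ℝ), f x := by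
  have hIoi : IntegrableOn f (Ioi (0:ℝ)) := by
    refine (hf.integrableOn (s := Ioi 0)).congr_fun (fun x hx => ?_) measurableSet_Ioi
    show f |x| = f x
    rw [abs_of_pos (mem_Ioi.mp hx)]
  have h1 := integral_re hf
  have h1' := integral_im hf
  have h2 := integral_re hIoi
  have h2' := integral_im hIoi
  simp only [RCLike.re_to_complex, RCLike.im_to_complex] at h1 h1' h2 h2'
  have hre := integral_comp_abs (f := fun x => (f x).re)
  have him := integral_comp_abs (f := fun x => (f x).im)
  apply Complex.ext
  · rw [Complex.mul_re]; norm_num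
    rw [← h1, ← h2]; exact hre
  · rw [Complex.mul_im]; norm_num
    rw [← h1', ← h2']; exact him

theorem stmt17 (ν : ℂ) (hν : 0 < ν.re) :
    (1 / (2 * (Real.pi : ℂ))) *
        ∫ s : ℝ, ∫ t : ℝ,
          (Real.exp (-(s ^ 2 + t ^ 2) / 2) : ℂ) * ((|s - t| : ℝ) : ℂ) ^ (2 * ν) =
      Complex.Gamma (1 + 2 * ν) / Complex.Gamma (1 + ν) := by
  have hw : 0 < (2*ν).re := by
    rw [show (2:ℂ)*ν = ν + ν by ring, Complex.add_re]; linarith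
  have hwne : (2*ν).re ≠ 0 := hw.ne'
  set C : ℝ → ℂ := fun u => (rexp (-(u^2/4)) : ℂ) * ((|u| : ℝ) : ℂ) ^ (2*ν) with hC
  set F : ℝ → ℝ → ℂ := fun s u => (rexp (-((s - u/2)^2)) : ℂ) * C u with hF
  -- Step A: rewrite the inner integral via t ↦ s - t
  have hinner : ∀ s : ℝ,
      (∫ t : ℝ, (Real.exp (-(s ^ 2 + t ^ 2) / 2) : ℂ) * ((|s - t| : ℝ) : ℂ) ^ (2 * ν))
        = ∫ u : ℝ, F s u := by
    intro s
    rw [← integral_sub_left_eq_self (fun u => F s u) volume s]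
    congr 1; funext t
    show (Real.exp (-(s ^ 2 + t ^ 2) / 2) : ℂ) * ((|s - t| : ℝ) : ℂ) ^ (2 * ν) = F s (s - t)
    simp only [hF, hC]
    rw [← mul_assoc, ← Complex.ofReal_mul, ← Real.exp_add]
    congr 3
    ring
  -- norm of C
  have hnormC : ∀ u : ℝ, ‖C u‖ = rexp (-(u^2/4)) * |u| ^ (2*ν).re := by
    intro u
    rw [hC, norm_mul, Complex.norm_real, Real.norm_eq_abs, abs_of_pos (Real.exp_pos _),
      norm_cpow_eq_rpow_re_of_nonneg (abs_nonneg u) hwne]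
  -- continuity of C
  have hcontC : Continuous C := by
    apply Continuous.mul
    · exact Complex.continuous_ofReal.comp (Real.continuous_exp.comp (by fun_prop))
    · exact (Complex.continuous_ofReal_cpow_const hw).comp continuous_abs
  have hCint : Integrable C := by
    refine ((aux_abs_rpow_int (b := 1/4) (by norm_num) hw).mono'
      hcontC.aestronglyMeasurable (Filter.Eventually.of_forall fun u => ?_))
    rw [hnormC u, mul_comm]
    gcongr
    apply le_of_eq
    ring_nf
  -- Step C: integrability on the product
  have hFint : Integrable (Function.uncurry F) (volume.prod volume) := by
    have hg : Integrable (fun p : ℝ × ℝ =>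
        rexp (-(1/4) * p.1^2) * (|p.2| ^ (2*ν).re * rexp (-(1/6) * p.2^2)))
        (volume.prod volume) :=
      (integrable_exp_neg_mul_sq (by norm_num : (0:ℝ) < 1/4)).mul_prod
        (aux_abs_rpow_int (by norm_num) hw)
    refine hg.mono' ?_ (Filter.Eventually.of_forall fun p => ?_)
    · apply Continuous.aestronglyMeasurable
      apply Continuous.mul
      · exact Complex.continuous_ofReal.comp (Real.continuous_exp.comp (by fun_prop))
      · exact hcontC.comp continuous_snd
    · obtain ⟨s, u⟩ := p
      show ‖(rexp (-((s - u/2)^2)) : ℂ) * C u‖ ≤ _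
      rw [norm_mul, Complex.norm_real, Real.norm_eq_abs, abs_of_pos (Real.exp_pos _), hnormC u]
      calc rexp (-((s - u/2)^2)) * (rexp (-(u^2/4)) * |u| ^ (2*ν).re)
          = (rexp (-((s - u/2)^2)) * rexp (-(u^2/4))) * |u| ^ (2*ν).re := by ring
        _ ≤ (rexp (-(1/4) * s^2) * rexp (-(1/6) * u^2)) * |u| ^ (2*ν).re := by
            apply mul_le_mul_of_nonneg_right _ (Real.rpow_nonneg (abs_nonneg u) _)
            rw [← Real.exp_add, ← Real.exp_add]
            exact Real.exp_le_exp.2 (by nlinarith [sq_nonneg (3*s - 2*u)])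
        _ = rexp (-(1/4) * s^2) * (|u| ^ (2*ν).re * rexp (-(1/6) * u^2)) := by ring
  -- Step D: Fubini and the Gaussian integral in s
  have gauss : ∫ s : ℝ, rexp (-s^2) = Real.sqrt π := by
    have := integral_gaussian 1
    simpa using this
  have hinner2 : ∀ u : ℝ, ∫ s : ℝ, F s u = ((Real.sqrt π : ℝ) : ℂ) * C u := by
    intro u
    rw [hF]
    rw [integral_mul_const]
    congr 1
    have h1 : ∫ s : ℝ, rexp (-((s - u/2)^2)) = Real.sqrt π := by
      rw [integral_sub_right_eq_self (fun s => rexp (-(s^2))) (u/2)]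
      simpa using gauss
    rw [← h1]
    exact integral_ofReal
  -- Step E: evenness
  set Ct : ℝ → ℂ := fun x => (rexp (-(x^2/4)) : ℂ) * ((x : ℝ) : ℂ) ^ (2*ν) with hCt
  have hCeq : (fun u : ℝ => C u) = fun u : ℝ => Ct |u| := by
    funext u
    simp only [hC, hCt, _root_.sq_abs]
  have heven : ∫ u : ℝ, C u = 2 * ∫ x in Ioi (0:ℝ), Ct x := by
    rw [hCeq]
    exact integral_comp_abs_cx (hCeq ▸ hCint)
  -- Step F: Mellin computation
  have hargs : (0:ℂ).re < ((2*ν+1)/2).re := by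
    rw [show (2*ν+1)/2 = ν + (1/2 : ℂ) by ring]
    simp only [Complex.add_re, Complex.zero_re]
    norm_num
    linarith
  have hq : (((1/4:ℝ)):ℂ) ^ (-(ν+1/2)) = (2:ℂ)^(2*ν+1) := by
    have h4 : (((1/4:ℝ)):ℂ) = (4:ℂ)⁻¹ := by norm_num
    have harg : (4:ℂ).arg ≠ π := by
      rw [show (4:ℂ) = ((4:ℝ):ℂ) by norm_num, Complex.arg_ofReal_of_nonneg (by norm_num)]
      exact Ne.symm Real.pi_ne_zero
    rw [h4, Complex.inv_cpow _ _ harg, Complex.cpow_neg, inv_inv]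
    rw [show (4:ℂ) = ((2:ℝ):ℂ) * ((2:ℝ):ℂ) by norm_num,
      mul_cpow_ofReal_nonneg (by norm_num) (by norm_num),
      show ((2:ℝ):ℂ) = (2:ℂ) by norm_num,
      ← Complex.cpow_add _ _ two_ne_zero]
    congr 1
    ring
  have hmellin : ∫ x in Ioi (0:ℝ), Ct x
      = (1/2 : ℂ) * ((2:ℂ)^(2*ν+1) * Complex.Gamma (ν + 1/2)) := by
    have e0 : (∫ x in Ioi (0:ℝ), Ct x)
        = mellin (fun t : ℝ => ((rexp (-(t ^ (2:ℝ) * (1/4))) : ℝ) : ℂ)) (2*ν+1) := by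
      simp only [mellin, smul_eq_mul, add_sub_cancel_right]
      refine (setIntegral_congr_fun measurableSet_Ioi fun t ht => ?_).symm
      simp only [hCt]
      rw [Real.rpow_two, mul_comm]
      congr 2
      ring
    rw [e0,
      mellin_comp_rpow (fun x : ℝ => ((rexp (-(x * (1/4))) : ℝ) : ℂ)) (2*ν+1) 2,
      show ((2*ν+1) / ((2:ℝ):ℂ)) = ν + 1/2 by push_cast; ring,
      mellin_comp_mul_right (fun x : ℝ => ((rexp (-x) : ℝ) : ℂ)) (ν + 1/2)
        (by norm_num : (0:ℝ) < 1/4),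
      ← Complex.GammaIntegral_eq_mellin,
      ← Complex.Gamma_eq_integral (by simpa [show (2*ν+1)/2 = ν + (1/2:ℂ) by ring] using hargs)]
    rw [hq, show |(2:ℝ)|⁻¹ = ((1/2:ℝ)) by norm_num, Complex.real_smul, smul_eq_mul]
    push_cast
    ring
  -- Final assembly
  simp only [hinner]
  rw [integral_integral_swap hFint]
  simp only [hinner2]
  rw [integral_const_mul, heven, hmellin]
  have hnu0 : ν ≠ 0 := fun h => by simp [h] at hν
  have h2nu0 : (2:ℂ)*ν ≠ 0 := mul_ne_zero two_ne_zero hnu0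
  have hGnu : Complex.Gamma ν ≠ 0 := Complex.Gamma_ne_zero_of_re_pos hν
  have dup := Complex.Gamma_mul_Gamma_add_half ν
  rw [show (1:ℂ) + 2*ν = 2*ν + 1 by ring, show (1:ℂ) + ν = ν + 1 by ring,
    Complex.Gamma_add_one _ h2nu0, Complex.Gamma_add_one _ hnu0]
  have hGhalf : Complex.Gamma (ν + 1/2)
      = Complex.Gamma (2*ν) * (2:ℂ)^(1-2*ν) * ((√π : ℝ):ℂ) / Complex.Gamma ν := by
    rw [eq_div_iff hGnu]
    linear_combination dup
  rw [hGhalf]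
  have hpow : (2:ℂ)^(2*ν+1) * (2:ℂ)^(1-2*ν) = 4 := by
    rw [← Complex.cpow_add _ _ two_ne_zero,
      show (2*ν+1)+(1-2*ν) = ((2:ℕ):ℂ) by push_cast; ring, Complex.cpow_natCast]
    norm_num
  have hsqpi : ((√π :ℝ):ℂ) * ((√π:ℝ):ℂ) = (π:ℂ) := by
    rw [← Complex.ofReal_mul, Real.mul_self_sqrt Real.pi_pos.le]
  have hpi0 : ((π:ℝ):ℂ) ≠ 0 := Complex.ofReal_ne_zero.2 Real.pi_ne_zero
  have hkey : ((√π:ℝ):ℂ) * ((√π:ℝ):ℂ) * ((2:ℂ)^(2*ν+1) * (2:ℂ)^(1-2*ν)) = 4 * (π:ℂ) := by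
    rw [hpow, hsqpi]; ring
  field_simp
  ring_nf
  ring_nf at hkey
  linear_combination (Complex.Gamma (ν*2)) * hkey
end
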